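/- For every real number κ with κ > 1, the function f_κ is not monotone increasing on (0,∞): there exist real numbers x, y with 0 < x < y and f_κ(y) < f_κ(x). Consequently f_κ is not operator monotone (it already fails on 1×1 matrices). -/
import Mathlib


/-- The function `f_κ(x) = (κ/2)·(x−1)(x^κ+1)/(x^κ−1)` for `x ≠ 1`, with `f_κ(1) = 1`. -/
noncomputable def fKappa (κ : ℝ) : ℝ → ℝ := fun x =>
  if x = 1 then 1 else κ / 2 * ((x - 1) * (x ^ κ + 1)) / (x ^ κ - 1)

/-- For `κ > 1`, the function `f_κ` is not monotone increasing on `(0,∞)`: there are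
`0 < x < y` with `f_κ(y) < f_κ(x)`. -/
theorem fKappa_not_monotone (κ : ℝ) (hκ : 1 < κ) :
    ∃ x y : ℝ, 0 < x ∧ x < y ∧ fKappa κ y < fKappa κ x := by
  have hκ0 : (0:ℝ) < κ := by linarith
  set c : ℝ := (9:ℝ)⁻¹ ^ (κ - 1)⁻¹ with hc
  have hc0 : 0 < c := Real.rpow_pos_of_pos (by norm_num) _
  set y : ℝ := min (1/2) c with hy
  have hy0 : 0 < y := lt_min (by norm_num) hc0
  have hy2 : y ≤ 1/2 := min_le_left _ _
  have hyc : y ≤ c := min_le_right _ _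
  set x : ℝ := y / 2 with hx
  have hx0 : 0 < x := by positivity
  have hxy : x < y := by rw [hx]; linarith
  refine ⟨x, y, hx0, hxy, ?_⟩
  -- key bound: y ^ κ ≤ y / 9
  have hck : c ^ (κ - 1) = 9⁻¹ := by
    rw [hc, ← Real.rpow_mul (by norm_num : (0:ℝ) ≤ 9⁻¹),
      inv_mul_cancel₀ (by linarith : κ - 1 ≠ 0), Real.rpow_one]
  have h1 : y ^ (κ - 1) ≤ (9:ℝ)⁻¹ := by
    calc y ^ (κ - 1) ≤ c ^ (κ - 1) := Real.rpow_le_rpow hy0.le hyc (by linarith)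
      _ = 9⁻¹ := hck
  have hyk : y ^ κ ≤ y / 9 := by
    have hsplit : y ^ κ = y ^ (κ - 1) * y := by
      rw [← Real.rpow_add_one hy0.ne' (κ - 1)]; norm_num
    rw [hsplit]
    calc y ^ (κ - 1) * y ≤ 9⁻¹ * y := mul_le_mul_of_nonneg_right h1 hy0.le
      _ = y / 9 := by ring
  set a : ℝ := y ^ κ with ha
  set b : ℝ := x ^ κ with hb
  have ha0 : 0 < a := Real.rpow_pos_of_pos hy0 _
  have hb0 : 0 < b := Real.rpow_pos_of_pos hx0 _
  have hb1 : b < 1 := Real.rpow_lt_one hx0.le (by linarith) hκ0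
  have ha1 : a ≤ 1/18 := by linarith
  have hxne : x ≠ 1 := by intro h; rw [h] at hx0; linarith [hx0, hxy, hy2]
  have hyne : y ≠ 1 := by intro h; linarith [hy2, h.ge]
  rw [fKappa, fKappa]
  simp only [if_neg hxne, if_neg hyne, ← ha, ← hb]
  have h1a : (0:ℝ) < 1 - a := by linarith
  have h1b : (0:ℝ) < 1 - b := by linarith
  have hκ2 : (0:ℝ) < κ / 2 := by linarith
  -- rewrite both sides with positive denominators
  have eqy : κ / 2 * ((y - 1) * (a + 1)) / (a - 1)
      = κ / 2 * ((1 - y) * (a + 1)) / (1 - a) := by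
    rw [div_eq_div_iff (by linarith : a - 1 ≠ 0) h1a.ne']
    ring
  have eqx : κ / 2 * ((x - 1) * (b + 1)) / (b - 1)
      = κ / 2 * ((1 - x) * (b + 1)) / (1 - b) := by
    rw [div_eq_div_iff (by linarith : b - 1 ≠ 0) h1b.ne']
    ring
  rw [eqy, eqx]
  have h1y : (0:ℝ) < 1 - y := by linarith
  have h1x : (0:ℝ) < 1 - x := by linarith
  have hyub : κ / 2 * ((1 - y) * (a + 1)) / (1 - a) ≤ κ / 2 * ((1 - y) * (1 + 4*a)) := by
    rw [mul_div_assoc]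
    have core : (1 - y) * (a + 1) / (1 - a) ≤ (1 - y) * (1 + 4*a) := by
      rw [div_le_iff₀ h1a]
      nlinarith [mul_nonneg (mul_nonneg h1y.le ha0.le) (show (0:ℝ) ≤ 1 - 2*a by linarith)]
    exact mul_le_mul_of_nonneg_left core hκ2.le
  have hxlb : κ / 2 * (1 - x) ≤ κ / 2 * ((1 - x) * (b + 1)) / (1 - b) := by
    rw [mul_div_assoc]
    have core : 1 - x ≤ (1 - x) * (b + 1) / (1 - b) := by
      rw [le_div_iff₀ h1b]
      nlinarith [mul_nonneg h1x.le hb0.le]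
    exact mul_le_mul_of_nonneg_left core hκ2.le
  have hmid : κ / 2 * ((1 - y) * (1 + 4*a)) < κ / 2 * (1 - x) := by
    have key : (1 - y) * (1 + 4*a) < 1 - x := by
      have : x = y / 2 := hx
      nlinarith [mul_nonneg hy0.le ha0.le]
    exact (mul_lt_mul_iff_right₀ hκ2).mpr key
  linarith
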